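/- Let 1 → A →α B →β C → 1 be a short exact sequence of groups, i.e. α : A → B is an injective group homomorphism, β : B → C is a surjective group homomorphism, and the range of α equals the kernel of β. Suppose P_A is a positive cone on A and P_C is a positive cone on C. Then the set P_B := α(P_A) ∪ β⁻¹(P_C) is a positive cone on B; in particular B is left-orderable. -/

import Mathlib

/-- A positive cone on a group `G`: a subset `P` closed under multiplication such that
`G` is the disjoint union of `P`, `{1}` and `P⁻¹`. -/
def IsPositiveCone {G : Type*} [Group G] (P : Set G) : Prop :=
  (∀ a ∈ P, ∀ b ∈ P, a * b ∈ P) ∧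
  (∀ g : G, g ∈ P ∨ g = 1 ∨ g⁻¹ ∈ P) ∧
  (1 : G) ∉ P ∧
  (∀ g ∈ P, g⁻¹ ∉ P)

/-- A positive cone yields a left-invariant linear order. -/
theorem IsPositiveCone.exists_linearOrder {G : Type*} [Group G] {P : Set G}
    (h : IsPositiveCone P) :
    ∃ lo : LinearOrder G, ∀ a b c : G, lo.lt a b → lo.lt (c * a) (c * b) := by
  obtain ⟨hmul, htri, hone, hinv⟩ := h
  set r : G → G → Prop := fun a b => a⁻¹ * b ∈ P with hr
  haveI : IsTrichotomous G r := ⟨by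
    intro a b hab hba
    rcases htri (a⁻¹ * b) with hp | he | hn
    · exact (hab hp).elim
    · simpa [eq_comm, inv_mul_eq_one] using he
    · exact (hba (by simpa [hr, mul_inv_rev] using hn)).elim⟩
  haveI : IsTrans G r := ⟨by
    intro a b c hab hbc
    have := hmul _ hab _ hbc
    simpa [hr, mul_assoc] using this⟩
  haveI : IsIrrefl G r := ⟨by intro a; simpa [hr] using hone⟩
  haveI : IsStrictTotalOrder G r := {}
  letI : DecidableRel r := fun a b => Classical.dec _
  refine ⟨linearOrderOfSTO r, ?_⟩
  intro a b c hab
  show r (c * a) (c * b)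
  show (c * a)⁻¹ * (c * b) ∈ P
  have heq : (c * a)⁻¹ * (c * b) = a⁻¹ * b := by group
  rw [heq]; exact hab

/-- Given a short exact sequence `1 → A → B → C → 1` and positive cones `P_A` on `A` and
`P_C` on `C`, the set `α(P_A) ∪ β⁻¹(P_C)` is a positive cone on `B`; in particular `B`
is left-orderable. -/
theorem positiveCone_of_short_exact_sequence
    {A B C : Type*} [Group A] [Group B] [Group C]
    (α : A →* B) (β : B →* C)
    (hα : Function.Injective α) (hβ : Function.Surjective β)
    (hexact : α.range = β.ker)
    (PA : Set A) (PC : Set C)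
    (hPA : IsPositiveCone PA) (hPC : IsPositiveCone PC) :
    IsPositiveCone ((⇑α) '' PA ∪ (⇑β) ⁻¹' PC) ∧
      ∃ lo : LinearOrder B, ∀ a b c : B, lo.lt a b → lo.lt (c * a) (c * b) := by
  obtain ⟨hmulA, htriA, honeA, hinvA⟩ := hPA
  obtain ⟨hmulC, htriC, honeC, hinvC⟩ := hPC
  have hβα : ∀ a : A, β (α a) = 1 := by
    intro a
    have : α a ∈ β.ker := hexact ▸ ⟨a, rfl⟩
    exact this
  have hcone : IsPositiveCone ((⇑α) '' PA ∪ (⇑β) ⁻¹' PC) := by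
    refine ⟨?_, ?_, ?_, ?_⟩
    · rintro x (⟨a, ha, rfl⟩ | hx) y (⟨b, hb, rfl⟩ | hy)
      · exact Or.inl ⟨a * b, hmulA a ha b hb, by simp⟩
      · refine Or.inr ?_
        show β (α a * y) ∈ PC
        simpa [hβα] using hy
      · refine Or.inr ?_
        show β (x * α b) ∈ PC
        simpa [hβα] using hx
      · exact Or.inr (show β (x * y) ∈ PC by simpa using hmulC _ hx _ hy)
    · intro g
      rcases htriC (β g) with hp | he | hn
      · exact Or.inl (Or.inr hp)
      · have : g ∈ α.range := hexact ▸ he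
        obtain ⟨a, rfl⟩ := this
        rcases htriA a with hp | rfl | hn
        · exact Or.inl (Or.inl ⟨a, hp, rfl⟩)
        · simp
        · exact Or.inr (Or.inr (Or.inl ⟨a⁻¹, hn, by simp⟩))
      · exact Or.inr (Or.inr (Or.inr (by simpa using hn)))
    · rintro (⟨a, ha, ha1⟩ | h1)
      · exact honeA (by rwa [← hα (ha1.trans (map_one α).symm)])
      · exact honeC (by simpa using h1)
    · rintro g (⟨a, ha, rfl⟩ | hg) (⟨b, hb, hb1⟩ | hg')
      · have : b = a⁻¹ := hα (by simpa using hb1)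
        exact hinvA a ha (this ▸ hb)
      · exact honeC (by simpa [hβα] using hg')
      · have : β g = 1 := by
          have : β g⁻¹ = 1 := hb1 ▸ hβα b
          simpa [inv_eq_one] using this
        exact honeC (this ▸ hg)
      · exact hinvC _ hg (by simpa using hg')
  exact ⟨hcone, hcone.exists_linearOrder⟩
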